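/- Let (X,d) be a finite ultrametric space with |X| ≥ 2 whose diametrical graph is complete bipartite with parts X_1 and X_2, where the subspaces X_1 and X_2 are both isometric to an ultrametric space (Y,ρ). Then |C(X)| = 1 + |C(Y)|. -/

import Mathlib

/-- The center of distances of a metric space. -/
def centerOfDistances (X : Type*) [MetricSpace X] : Set ℝ :=
  {t : ℝ | ∀ p : X, ∃ x : X, dist p x = t}

/-- If the diametrical graph of a finite ultrametric space with at least two points
is complete bipartite with parts `X₁`, `X₂` which are both isometric to an ultrametric
space `Y`, then `|C(X)| = 1 + |C(Y)|`. -/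
theorem card_center_bipartite {X : Type*} [MetricSpace X] [Fintype X]
    [IsUltrametricDist X] (h : 2 ≤ Fintype.card X)
    (Y : Type*) [MetricSpace Y] [IsUltrametricDist Y]
    (X₁ X₂ : Set X) (h₁ : X₁.Nonempty) (h₂ : X₂.Nonempty)
    (hdisj : Disjoint X₁ X₂) (hunion : X₁ ∪ X₂ = Set.univ)
    (hdiam : ∀ u v : X, dist u v = Metric.diam (Set.univ : Set X) ↔
      ((u ∈ X₁ ∧ v ∈ X₂) ∨ (u ∈ X₂ ∧ v ∈ X₁)))
    (e₁ : X₁ ≃ᵢ Y) (e₂ : X₂ ≃ᵢ Y) :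
    (centerOfDistances X).ncard = 1 + (centerOfDistances Y).ncard := by
  obtain ⟨a₁, ha₁⟩ := h₁
  obtain ⟨a₂, ha₂⟩ := h₂
  set D := Metric.diam (Set.univ : Set X) with hD
  have hFY : Finite Y := Finite.of_equiv _ e₁.toEquiv
  -- a point of X₁ at distance D from a point of X₁ is impossible
  have hnotD : ∀ u v : X₁, dist (u : X) (v : X) ≠ D := by
    intro u v hd
    rcases (hdiam _ _).1 hd with ⟨hu, hv⟩ | ⟨hu, hv⟩
    · exact Set.disjoint_left.1 hdisj v.2 hv
    · exact Set.disjoint_left.1 hdisj u.2 hu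
  have hnotD₂ : ∀ u v : X₂, dist (u : X) (v : X) ≠ D := by
    intro u v hd
    rcases (hdiam _ _).1 hd with ⟨hu, hv⟩ | ⟨hu, hv⟩
    · exact Set.disjoint_left.1 hdisj hu u.2
    · exact Set.disjoint_left.1 hdisj hv v.2
  have hDY : D ∉ centerOfDistances Y := by
    intro hmem
    obtain ⟨x, hx⟩ := hmem (e₁ ⟨a₁, ha₁⟩)
    have hd : dist ((⟨a₁, ha₁⟩ : X₁) : X) ((e₁.symm x : X₁) : X) = D := by
      have := e₁.dist_eq ⟨a₁, ha₁⟩ (e₁.symm x)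
      rw [e₁.apply_symm_apply, hx] at this
      simpa [Subtype.dist_eq] using this.symm
    exact hnotD _ _ hd
  have hset : centerOfDistances X = insert D (centerOfDistances Y) := by
    ext t
    constructor
    · intro ht
      by_cases htD : t = D
      · exact Or.inl htD
      · refine Or.inr (fun q => ?_)
        obtain ⟨x, hx⟩ := ht ((e₁.symm q : X₁) : X)
        have hxmem : x ∈ X₁ := by
          have hx2 : x ∈ X₁ ∪ X₂ := hunion ▸ Set.mem_univ x
          rcases hx2 with hm | hm
          · exact hm
          · exact absurd (hx ▸ (hdiam _ _).2 (Or.inl ⟨(e₁.symm q).2, hm⟩)) htD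
        refine ⟨e₁ ⟨x, hxmem⟩, ?_⟩
        have := e₁.dist_eq (e₁.symm q) ⟨x, hxmem⟩
        rw [e₁.apply_symm_apply] at this
        rw [this]
        exact hx
    · rintro (rfl | ht)
      · intro p
        have hp : p ∈ X₁ ∪ X₂ := hunion ▸ Set.mem_univ p
        rcases hp with hm | hm
        · exact ⟨a₂, (hdiam _ _).2 (Or.inl ⟨hm, ha₂⟩)⟩
        · exact ⟨a₁, (hdiam _ _).2 (Or.inr ⟨hm, ha₁⟩)⟩
      · intro p
        have hp : p ∈ X₁ ∪ X₂ := hunion ▸ Set.mem_univ p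
        rcases hp with hm | hm
        · obtain ⟨y, hy⟩ := ht (e₁ ⟨p, hm⟩)
          refine ⟨(e₁.symm y : X₁), ?_⟩
          have := e₁.dist_eq ⟨p, hm⟩ (e₁.symm y)
          rw [e₁.apply_symm_apply, hy] at this
          simpa [Subtype.dist_eq] using this.symm
        · obtain ⟨y, hy⟩ := ht (e₂ ⟨p, hm⟩)
          refine ⟨(e₂.symm y : X₂), ?_⟩
          have := e₂.dist_eq ⟨p, hm⟩ (e₂.symm y)
          rw [e₂.apply_symm_apply, hy] at this
          simpa [Subtype.dist_eq] using this.symm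
  have hfin : (centerOfDistances Y).Finite := by
    refine Set.Finite.subset (Set.finite_range (fun x : Y => dist (e₁ ⟨a₁, ha₁⟩) x)) ?_
    intro t ht
    obtain ⟨x, hx⟩ := ht (e₁ ⟨a₁, ha₁⟩)
    exact ⟨x, hx⟩
  rw [hset, Set.ncard_insert_of_notMem hDY hfin, add_comm]
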